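/- arXiv:2005.06502 — 3 statements merged into one kernel-verified Lean document; each statement's English description precedes it below -/
import Mathlib

section
/- In the gambler's ruin random walk with ties on {0,...,N} with 0 < p, 0 < q, the probability of never being absorbed (at 0 or N) starting from any state i is 0. -/
open MeasureTheory ProbabilityTheory

/-- Gambler's ruin with ties: starting from any state, the probability of never
being absorbed at `0` or `N` is `0`. -/
theorem gamblers_ruin_absorption_as
    {Ω : Type*} [MeasurableSpace Ω] (μ : Measure Ω) [IsProbabilityMeasure μ]
    (p q : ℝ) (hp0 : 0 < p) (hq0 : 0 < q) (hpq : p + q ≤ 1)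
    (N i : ℕ) (hi : i ≤ N)
    (X : ℕ → Ω → ℤ) (hXm : ∀ n, Measurable (X n))
    (hindep : iIndepFun X μ)
    (hX1 : ∀ n, μ {ω | X n ω = 1} = ENNReal.ofReal p)
    (hX2 : ∀ n, μ {ω | X n ω = -1} = ENNReal.ofReal q)
    (hX3 : ∀ n, μ {ω | X n ω = 0} = ENNReal.ofReal (1 - p - q))
    (W : ℕ → Ω → ℤ) (hW0 : ∀ ω, W 0 ω = (i : ℤ))
    (hWrec : ∀ n ω, W (n + 1) ω =
      if W n ω = 0 ∨ W n ω = (N : ℤ) then W n ω else W n ω + X n ω) :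
    μ {ω | ∀ n, W n ω ≠ 0 ∧ W n ω ≠ (N : ℤ)} = 0 := by
  classical
  by_cases hiN : 0 < i ∧ i < N
  swap
  · have hempty : {ω | ∀ n, W n ω ≠ 0 ∧ W n ω ≠ (N : ℤ)} = ∅ := by
      ext ω
      simp only [Set.mem_setOf_eq, Set.mem_empty_iff_false, iff_false, not_forall]
      refine ⟨0, ?_⟩
      rw [hW0, not_and_or]
      push_neg at hiN
      rcases Nat.eq_zero_or_pos i with h0 | h0
      · left; simp [h0]
      · right; simp only [ne_eq, not_not]
        exact_mod_cast le_antisymm hi (hiN h0)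
    rw [hempty, measure_empty]
  obtain ⟨hip, hiN'⟩ := hiN
  have hNpos : 0 < N := lt_of_le_of_lt (Nat.zero_le _) hiN'
  -- the events `A k` : all of `X (k*N), ..., X (k*N + N - 1)` equal `1`
  set A : ℕ → Set Ω :=
    fun k => ⋂ t ∈ (Finset.range N).image (fun j => k * N + j), X t ⁻¹' {1} with hA
  have hAmeas : ∀ k, MeasurableSet (A k) := fun k =>
    Finset.measurableSet_biInter _ fun t _ => (hXm t) (measurableSet_singleton 1)
  have hinj : ∀ k : ℕ, Function.Injective (fun j => k * N + j : ℕ → ℕ) :=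
    fun k a b h => by simpa using h
  have hdiv : ∀ k j, j < N → (k * N + j) / N = k := by
    intro k j hj
    rw [mul_comm, Nat.mul_add_div hNpos, Nat.div_eq_of_lt hj, add_zero]
  have hpre : ∀ t, X t ⁻¹' {1} = {ω | X t ω = 1} := fun t => rfl
  have key : ∀ S : Finset ℕ, μ (⋂ k ∈ S, A k) = ENNReal.ofReal p ^ (N * S.card) := by
    intro S
    set T : Finset ℕ := S.biUnion (fun k => (Finset.range N).image (fun j => k * N + j)) with hT
    have h1 : (⋂ k ∈ S, A k) = ⋂ t ∈ T, X t ⁻¹' {1} :=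
      (Finset.set_biInter_biUnion S _ _).symm
    have h2 : μ (⋂ t ∈ T, X t ⁻¹' {1}) = ∏ t ∈ T, μ (X t ⁻¹' {1}) :=
      hindep.measure_inter_preimage_eq_mul T (sets := fun _ => {1})
        (fun t _ => measurableSet_singleton 1)
    have hcard : T.card = N * S.card := by
      rw [hT, Finset.card_biUnion]
      · rw [Finset.sum_congr rfl (fun k _ => by
          rw [Finset.card_image_of_injective _ (hinj k), Finset.card_range])]
        rw [Finset.sum_const, smul_eq_mul, mul_comm]
      · intro a _ b _ hab
        rw [Function.onFun, Finset.disjoint_left]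
        rintro x hxa hxb
        simp only [Finset.mem_image, Finset.mem_range] at hxa hxb
        obtain ⟨j, hj, rfl⟩ := hxa
        obtain ⟨j', hj', heq⟩ := hxb
        exact hab (by rw [← hdiv a j hj, ← heq, hdiv b j' hj'])
    rw [h1, h2]
    calc ∏ t ∈ T, μ (X t ⁻¹' {1}) = ∏ _t ∈ T, ENNReal.ofReal p :=
          Finset.prod_congr rfl (fun t _ => by rw [hpre, hX1])
      _ = ENNReal.ofReal p ^ (N * S.card) := by rw [Finset.prod_const, hcard]
  have hAk : ∀ k, μ (A k) = ENNReal.ofReal p ^ N := by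
    intro k
    have := key {k}
    simpa using this
  have hAindep : iIndepSet A μ := by
    rw [iIndepSet_iff_meas_biInter hAmeas]
    intro S
    rw [key S]
    simp only [hAk, Finset.prod_const]
    rw [pow_mul]
  have hBC : μ (Filter.limsup A Filter.atTop) = 1 := by
    refine measure_limsup_eq_one hAmeas hAindep ?_
    simp only [hAk]
    exact ENNReal.tsum_const_eq_top_of_ne_zero
      (pow_ne_zero _ (ENNReal.ofReal_pos.2 hp0).ne')
  have hsub : Filter.limsup A Filter.atTop ⊆ ⋃ k, A k := by
    rw [Filter.limsup_eq_iInf_iSup_of_nat]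
    intro ω hω
    simp only [Set.iInf_eq_iInter, Set.iSup_eq_iUnion, Set.mem_iInter, Set.mem_iUnion] at hω
    obtain ⟨k, _, hk⟩ := hω 0
    exact Set.mem_iUnion.2 ⟨k, hk⟩
  have hU : μ (⋃ k, A k) = 1 :=
    le_antisymm prob_le_one (hBC ▸ measure_mono hsub)
  have haeU : ∀ᵐ ω ∂μ, ∃ k, ω ∈ A k := by
    rw [ae_iff]
    have hset : {ω | ¬ ∃ k, ω ∈ A k} = (⋃ k, A k)ᶜ := by ext ω; simp
    rw [hset, measure_compl (MeasurableSet.iUnion hAmeas) (measure_ne_top μ _), hU,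
      measure_univ, tsub_self]
  have haeX : ∀ᵐ ω ∂μ, ∀ n, X n ω = 1 ∨ X n ω = -1 ∨ X n ω = 0 := by
    rw [ae_all_iff]
    intro n
    rw [ae_iff]
    have hm1 : MeasurableSet {ω | X n ω = 1} := (hXm n) (measurableSet_singleton 1)
    have hm2 : MeasurableSet {ω | X n ω = -1} := (hXm n) (measurableSet_singleton (-1))
    have hm3 : MeasurableSet {ω | X n ω = 0} := (hXm n) (measurableSet_singleton 0)
    have hset : {ω | ¬ (X n ω = 1 ∨ X n ω = -1 ∨ X n ω = 0)} =
        ({ω | X n ω = 1} ∪ ({ω | X n ω = -1} ∪ {ω | X n ω = 0}))ᶜ := by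
      ext ω; simp [not_or]
    have hd23 : Disjoint {ω | X n ω = -1} {ω | X n ω = 0} := by
      rw [Set.disjoint_left]
      rintro ω h1 h2
      simp only [Set.mem_setOf_eq] at h1 h2
      omega
    have hd1 : Disjoint {ω | X n ω = 1} ({ω | X n ω = -1} ∪ {ω | X n ω = 0}) := by
      rw [Set.disjoint_union_right]
      constructor <;>
        (rw [Set.disjoint_left]; rintro ω h1 h2;
         simp only [Set.mem_setOf_eq] at h1 h2; omega)
    have hmu : μ ({ω | X n ω = 1} ∪ ({ω | X n ω = -1} ∪ {ω | X n ω = 0})) = 1 := by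
      rw [measure_union hd1 (hm2.union hm3), measure_union hd23 hm3, hX1, hX2, hX3,
        ← ENNReal.ofReal_add hq0.le (by linarith), ← ENNReal.ofReal_add hp0.le (by linarith)]
      have : p + (q + (1 - p - q)) = 1 := by ring
      rw [this, ENNReal.ofReal_one]
    rw [hset, measure_compl (hm1.union (hm2.union hm3)) (measure_ne_top μ _), hmu,
      measure_univ, tsub_self]
  have hmain : ∀ᵐ ω ∂μ, ω ∉ {ω | ∀ n, W n ω ≠ 0 ∧ W n ω ≠ (N : ℤ)} := by
    filter_upwards [haeU, haeX] with ω hk hX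
    intro hω
    obtain ⟨k, hkA⟩ := hk
    have hX1k : ∀ j, j < N → X (k * N + j) ω = 1 := by
      intro j hj
      have := Set.mem_iInter₂.1 hkA (k * N + j)
        (Finset.mem_image.2 ⟨j, Finset.mem_range.2 hj, rfl⟩)
      simpa using this
    have hbound : ∀ n, 1 ≤ W n ω ∧ W n ω ≤ (N : ℤ) - 1 := by
      intro n
      induction n with
      | zero => rw [hW0]; omega
      | succ n ih =>
        have hne' := hω (n + 1)
        have hrec := hWrec n ω
        rw [if_neg (not_or.2 (hω n))] at hrec
        rcases hX n with h | h | h <;> rw [h] at hrec <;> omega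
    have hrun : ∀ j, j ≤ N → W (k * N + j) ω = W (k * N) ω + j := by
      intro j hj
      induction j with
      | zero => simp
      | succ j ih =>
        have hj' : j < N := hj
        have hrec := hWrec (k * N + j) ω
        rw [if_neg (not_or.2 (hω (k * N + j))), hX1k j hj'] at hrec
        have hstep : k * N + (j + 1) = (k * N + j) + 1 := by ring
        rw [hstep, hrec, ih (le_of_lt hj')]
        push_cast
        ring
    have h1 := hbound (k * N)
    have h2 := hbound (k * N + N)
    have h3 := hrun N le_rfl
    omega
  exact measure_eq_zero_iff_ae_notMem.2 hmain
end

section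
/- Assume W_1 > W_0 > 0 and let μ_0 = W_0·N/(W_0+W_1). If the initial number of 1's is at least 2μ_0 (and 2μ_0 ≤ N), then the probability that the consensus value is 1 is at least (1-(W_0/W_1)^{4μ_0}) / (1-(W_0/W_1)^{2N}) ≥ 1 - (W_0/W_1)^{4μ_0}. -/
open MeasureTheory ProbabilityTheory

set_option linter.unusedSectionVars false
set_option linter.unusedVariables false
set_option maxHeartbeats 1000000

namespace EpiAux



/-- Deterministic walk: from initial value `i`, absorbing at `0` and `N`, steps `x`. -/
def F (i N : ℕ) : ℕ → (ℕ → ℤ) → ℤ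
  | 0, _ => (i : ℤ)
  | n + 1, x =>
      if F i N n x = 0 ∨ F i N n x = (N : ℤ) then F i N n x else F i N n x + x n

lemma F_measurable (i N n : ℕ) : Measurable (F i N n) := by
  induction n with
  | zero => exact measurable_const
  | succ n ih =>
      have hcond : MeasurableSet {x : ℕ → ℤ | F i N n x = 0 ∨ F i N n x = (N : ℤ)} := by
        have : {x : ℕ → ℤ | F i N n x = 0 ∨ F i N n x = (N : ℤ)}
            = F i N n ⁻¹' {0} ∪ F i N n ⁻¹' {(N : ℤ)} := by
          ext x; simp [Set.mem_preimage, Set.mem_union]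
        rw [this]
        exact (ih (measurableSet_singleton _)).union (ih (measurableSet_singleton _))
      exact Measurable.ite hcond ih (ih.add (measurable_pi_apply n))

lemma F_congr (i N : ℕ) : ∀ (n : ℕ) (x y : ℕ → ℤ), (∀ k, k < n → x k = y k) →
    F i N n x = F i N n y := by
  intro n
  induction n with
  | zero => intro x y _; rfl
  | succ n ih =>
      intro x y h
      have h1 : F i N n x = F i N n y := ih x y fun k hk => h k (hk.trans (Nat.lt_succ_self n))
      simp only [F, h1, h n (Nat.lt_succ_self n)]




noncomputable def phi (p q : ℝ) (N : ℕ) (j : ℕ) : ℝ := (1 - (q/p)^j) / (1 - (q/p)^N)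

lemma rho_lt_one {p q : ℝ} (hq : 0 < q) (hqp : q < p) : q / p < 1 :=
  (div_lt_one (hq.trans hqp)).mpr hqp

lemma den_pos {p q : ℝ} (hq : 0 < q) (hqp : q < p) {N : ℕ} (hN : 1 ≤ N) :
    0 < 1 - (q/p)^N := by
  have h1 : (q/p)^N < 1 :=
    pow_lt_one₀ (le_of_lt (div_pos hq (hq.trans hqp))) (rho_lt_one hq hqp) (by omega)
  linarith

lemma phi_nonneg {p q : ℝ} (hq : 0 < q) (hqp : q < p) {N : ℕ} (hN : 1 ≤ N) {j : ℕ}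
    (hj : j ≤ N) : 0 ≤ phi p q N j := by
  have h1 : (q/p)^j ≤ 1 :=
    pow_le_one₀ (le_of_lt (div_pos hq (hq.trans hqp))) (le_of_lt (rho_lt_one hq hqp))
  exact div_nonneg (by linarith) (le_of_lt (den_pos hq hqp hN))

lemma phi_le_one {p q : ℝ} (hq : 0 < q) (hqp : q < p) {N : ℕ} (hN : 1 ≤ N) {j : ℕ}
    (hj : j ≤ N) : phi p q N j ≤ 1 := by
  have hd := den_pos hq hqp hN
  rw [phi, div_le_one hd]
  have : (q/p)^N ≤ (q/p)^j :=
    pow_le_pow_of_le_one (le_of_lt (div_pos hq (hq.trans hqp)))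
      (le_of_lt (rho_lt_one hq hqp)) hj
  linarith

lemma phi_zero (p q : ℝ) (N : ℕ) : phi p q N 0 = 0 := by simp [phi]

lemma phi_N {p q : ℝ} (hq : 0 < q) (hqp : q < p) {N : ℕ} (hN : 1 ≤ N) : phi p q N N = 1 := by
  rw [phi, div_self (ne_of_gt (den_pos hq hqp hN))]

lemma phi_harmonic {p q : ℝ} (hq : 0 < q) (hqp : q < p) {N : ℕ} (hN : 1 ≤ N) (j : ℕ) :
    p * phi p q N (j+2) + q * phi p q N j + (1 - p - q) * phi p q N (j+1)
      = phi p q N (j+1) := by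
  have hp : (0:ℝ) < p := hq.trans hqp
  have hd : (1 : ℝ) - (q/p)^N ≠ 0 := ne_of_gt (den_pos hq hqp hN)
  have hpne : p ≠ 0 := ne_of_gt hp
  have hs : p * (q/p)^2 + q = (p+q) * (q/p) := by field_simp; ring
  simp only [phi]
  rw [show p * ((1 - (q/p)^(j+2)) / (1 - (q/p)^N)) + q * ((1 - (q/p)^j) / (1 - (q/p)^N))
      + (1 - p - q) * ((1 - (q/p)^(j+1)) / (1 - (q/p)^N))
      = (p * (1 - (q/p)^(j+2)) + q * (1 - (q/p)^j) + (1 - p - q) * (1 - (q/p)^(j+1)))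
        / (1 - (q/p)^N) by ring]
  congr 1
  linear_combination (-(q/p)^j) * hs


section Walk
variable {Ω : Type*} [MeasurableSpace Ω] {μ : Measure Ω} [IsProbabilityMeasure μ]
  {N i : ℕ} {X : ℕ → Ω → ℤ} {W : ℕ → Ω → ℤ} {p q : ℝ}

lemma W_eq_F (hW0' : ∀ ω, W 0 ω = (i : ℤ))
    (hWrec : ∀ n ω, W (n + 1) ω =
      if W n ω = 0 ∨ W n ω = (N : ℤ) then W n ω else W n ω + X n ω) :
    ∀ n ω, W n ω = F i N n (fun k => X k ω) := by
  intro n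
  induction n with
  | zero => intro ω; exact hW0' ω
  | succ n ih => intro ω; rw [hWrec n ω, ih ω]; rfl

lemma W_measurable (hXm : ∀ n, Measurable (X n)) (hW0' : ∀ ω, W 0 ω = (i : ℤ))
    (hWrec : ∀ n ω, W (n + 1) ω =
      if W n ω = 0 ∨ W n ω = (N : ℤ) then W n ω else W n ω + X n ω)
    (n : ℕ) : Measurable (W n) := by
  have : W n = fun ω => F i N n (fun k => X k ω) := funext (W_eq_F hW0' hWrec n)
  rw [this]
  exact (F_measurable i N n).comp (measurable_pi_lambda _ fun k => hXm k)

/-- `W n` is independent of the block of steps `X k`, `n ≤ k < m`. -/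

lemma indep_W_block (hXm : ∀ n, Measurable (X n))
    (hindep : iIndepFun X μ)
    (hW0' : ∀ ω, W 0 ω = (i : ℤ))
    (hWrec : ∀ n ω, W (n + 1) ω =
      if W n ω = 0 ∨ W n ω = (N : ℤ) then W n ω else W n ω + X n ω)
    (n m : ℕ) :
    IndepFun (W n) (fun ω (k : (Finset.Ico n m : Finset ℕ)) => X (k : ℕ) ω) μ := by
  have hdisj : Disjoint (Finset.range n) (Finset.Ico n m) := by
    simp only [Finset.disjoint_left, Finset.mem_range, Finset.mem_Ico]
    omega
  have h := hindep.indepFun_finset (Finset.range n) (Finset.Ico n m) hdisj hXm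
  set g : ((k : (Finset.range n : Finset ℕ)) → ℤ) → ℤ :=
    fun v => F i N n (fun k => if h : k ∈ Finset.range n then v ⟨k, h⟩ else 0) with hg
  have hgm : Measurable g := by
    apply (F_measurable i N n).comp
    apply measurable_pi_lambda
    intro k
    by_cases hk : k ∈ Finset.range n
    · simpa [hk] using measurable_pi_apply (⟨k, hk⟩ : (Finset.range n : Finset ℕ))
    · simpa [hk] using measurable_const
  have h2 := h.comp hgm measurable_id
  have hWeq : (g ∘ fun ω (k : (Finset.range n : Finset ℕ)) => X (k : ℕ) ω) = W n := by
    funext ω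
    simp only [Function.comp_apply, hg]
    rw [W_eq_F hW0' hWrec n ω]
    apply F_congr
    intro k hk
    simp [Finset.mem_range.mpr hk]
  have hXeq : (id ∘ fun ω (k : (Finset.Ico n m : Finset ℕ)) => X (k : ℕ) ω)
      = fun ω (k : (Finset.Ico n m : Finset ℕ)) => X (k : ℕ) ω := rfl
  rwa [hWeq, hXeq] at h2

lemma indep_W_X (hXm : ∀ n, Measurable (X n))
    (hindep : iIndepFun X μ)
    (hW0' : ∀ ω, W 0 ω = (i : ℤ))
    (hWrec : ∀ n ω, W (n + 1) ω =
      if W n ω = 0 ∨ W n ω = (N : ℤ) then W n ω else W n ω + X n ω)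
    (n : ℕ) (j e : ℤ) :
    μ ({ω | W n ω = j} ∩ {ω | X n ω = e}) = μ {ω | W n ω = j} * μ {ω | X n ω = e} := by
  have h := indep_W_block hXm hindep hW0' hWrec n (n + 1)
  have hn : n ∈ Finset.Ico n (n + 1) := by simp
  have := h.measure_inter_preimage_eq_mul {j}
    ((fun v : ((k : (Finset.Ico n (n+1) : Finset ℕ)) → ℤ) => v ⟨n, hn⟩) ⁻¹' {e})
    (MeasurableSet.of_discrete) ((measurable_pi_apply _) (MeasurableSet.of_discrete))
  simpa [Set.preimage, Set.inter_def] using this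

lemma indep_interior_block (hXm : ∀ n, Measurable (X n))
    (hindep : iIndepFun X μ)
    (hW0' : ∀ ω, W 0 ω = (i : ℤ))
    (hWrec : ∀ n ω, W (n + 1) ω =
      if W n ω = 0 ∨ W n ω = (N : ℤ) then W n ω else W n ω + X n ω)
    (n m : ℕ) :
    μ ({ω | W n ω ≠ 0 ∧ W n ω ≠ (N : ℤ)} ∩ {ω | ∃ k ∈ Finset.Ico n m, X k ω ≠ 1})
      = μ {ω | W n ω ≠ 0 ∧ W n ω ≠ (N : ℤ)} * μ {ω | ∃ k ∈ Finset.Ico n m, X k ω ≠ 1} := by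
  have h := indep_W_block hXm hindep hW0' hWrec n m
  have := h.measure_inter_preimage_eq_mul {z : ℤ | z ≠ 0 ∧ z ≠ (N : ℤ)}
    {v : (k : (Finset.Ico n m : Finset ℕ)) → ℤ | ∃ k, v k ≠ 1}
    (MeasurableSet.of_discrete) ?_
  · have e1 : (fun ω (k : (Finset.Ico n m : Finset ℕ)) => X (k : ℕ) ω) ⁻¹'
        {v : (k : (Finset.Ico n m : Finset ℕ)) → ℤ | ∃ k, v k ≠ 1}
        = {ω | ∃ k ∈ Finset.Ico n m, X k ω ≠ 1} := by
      ext ω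
      simp only [Set.mem_preimage, Set.mem_setOf_eq]
      constructor
      · rintro ⟨k, hk⟩; exact ⟨k, k.2, hk⟩
      · rintro ⟨k, hk, hne⟩; exact ⟨⟨k, hk⟩, hne⟩
    rwa [e1] at this
  · have : {v : (k : (Finset.Ico n m : Finset ℕ)) → ℤ | ∃ k, v k ≠ 1}
        = ⋃ k, (fun v : (k : (Finset.Ico n m : Finset ℕ)) → ℤ => v k) ⁻¹' {z | z ≠ 1} := by
      ext v; simp
    rw [this]
    exact MeasurableSet.iUnion fun k => (measurable_pi_apply k) (MeasurableSet.of_discrete)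

lemma block_prob (hXm : ∀ n, Measurable (X n))
    (hindep : iIndepFun X μ)
    [IsProbabilityMeasure μ]
    {p : ℝ} (hp0 : 0 ≤ p) (hp1 : p ≤ 1)
    (hX1 : ∀ n, μ {ω | X n ω = 1} = ENNReal.ofReal p)
    (n m : ℕ) :
    μ {ω | ∃ k ∈ Finset.Ico n m, X k ω ≠ 1} = ENNReal.ofReal (1 - p ^ (m - n)) := by
  have hmeas : ∀ k : ℕ, MeasurableSet {ω | X k ω = 1} := fun k =>
    (hXm k) (MeasurableSet.of_discrete (s := {1}))
  have hB : μ (⋂ k ∈ Finset.Ico n m, X k ⁻¹' {1}) = ENNReal.ofReal (p ^ (m - n)) := by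
    rw [hindep.measure_inter_preimage_eq_mul (Finset.Ico n m)
      (sets := fun _ => {1}) (fun k _ => MeasurableSet.of_discrete)]
    have : ∀ k ∈ Finset.Ico n m, μ (X k ⁻¹' {1}) = ENNReal.ofReal p := by
      intro k _
      have : X k ⁻¹' {1} = {ω | X k ω = 1} := rfl
      rw [this, hX1 k]
    rw [Finset.prod_congr rfl this, Finset.prod_const, Nat.card_Ico,
      ← ENNReal.ofReal_pow hp0]
  have hcompl : {ω | ∃ k ∈ Finset.Ico n m, X k ω ≠ 1}
      = (⋂ k ∈ Finset.Ico n m, X k ⁻¹' {1})ᶜ := by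
    ext ω; simp [Set.mem_iInter]
  rw [hcompl]
  have hSm : MeasurableSet (⋂ k ∈ Finset.Ico n m, X k ⁻¹' {1}) :=
    Finset.measurableSet_biInter _ fun k _ => hmeas k
  rw [prob_compl_eq_one_sub hSm, hB, ENNReal.ofReal_sub _ (pow_nonneg hp0 _),
    ENNReal.ofReal_one]

lemma X_bad_null (hXm : ∀ n, Measurable (X n))
    (hp : 0 ≤ p) (hq : 0 ≤ q) (hpq : p + q ≤ 1)
    (hX1 : ∀ n, μ {ω | X n ω = 1} = ENNReal.ofReal p)
    (hX2 : ∀ n, μ {ω | X n ω = -1} = ENNReal.ofReal q)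
    (hX3 : ∀ n, μ {ω | X n ω = 0} = ENNReal.ofReal (1 - p - q)) (n : ℕ) :
    μ {ω | ¬(X n ω = 1 ∨ X n ω = -1 ∨ X n ω = 0)} = 0 := by
  have hA : MeasurableSet {ω | X n ω = 1} := (hXm n) (MeasurableSet.of_discrete (s := {1}))
  have hB : MeasurableSet {ω | X n ω = -1} := (hXm n) (MeasurableSet.of_discrete (s := {-1}))
  have hC : MeasurableSet {ω | X n ω = 0} := (hXm n) (MeasurableSet.of_discrete (s := {0}))
  have hU : μ ({ω | X n ω = 1} ∪ {ω | X n ω = -1} ∪ {ω | X n ω = 0}) = 1 := by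
    rw [measure_union ?d2 hC, measure_union ?d1 hB, hX1, hX2, hX3,
      ← ENNReal.ofReal_add hp hq, ← ENNReal.ofReal_add (by linarith) (by linarith)]
    · norm_num
    case d1 =>
      rw [Set.disjoint_left]; intro ω h1 h2
      simp only [Set.mem_setOf_eq] at h1 h2; omega
    case d2 =>
      rw [Set.disjoint_left]; rintro ω (h1 | h1) h2 <;>
        simp only [Set.mem_setOf_eq] at h1 h2 <;> omega
  have : {ω | ¬(X n ω = 1 ∨ X n ω = -1 ∨ X n ω = 0)}
      = ({ω | X n ω = 1} ∪ {ω | X n ω = -1} ∪ {ω | X n ω = 0})ᶜ := by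
    ext ω; simp [or_assoc]; tauto
  rw [this, prob_compl_eq_one_sub ((hA.union hB).union hC), hU, tsub_self]

lemma G_null (hXm : ∀ n, Measurable (X n))
    (hp : 0 ≤ p) (hq : 0 ≤ q) (hpq : p + q ≤ 1)
    (hX1 : ∀ n, μ {ω | X n ω = 1} = ENNReal.ofReal p)
    (hX2 : ∀ n, μ {ω | X n ω = -1} = ENNReal.ofReal q)
    (hX3 : ∀ n, μ {ω | X n ω = 0} = ENNReal.ofReal (1 - p - q)) :
    μ {ω | ¬∀ n, (X n ω = 1 ∨ X n ω = -1 ∨ X n ω = 0)} = 0 := by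
  have : {ω | ¬∀ n, (X n ω = 1 ∨ X n ω = -1 ∨ X n ω = 0)}
      = ⋃ n, {ω | ¬(X n ω = 1 ∨ X n ω = -1 ∨ X n ω = 0)} := by
    ext ω; simp [not_forall]
  rw [this]
  exact measure_iUnion_null fun n => X_bad_null hXm hp hq hpq hX1 hX2 hX3 n

section Det

variable (hWrec : ∀ n ω, W (n + 1) ω =
      if W n ω = 0 ∨ W n ω = (N : ℤ) then W n ω else W n ω + X n ω)
  (hW0' : ∀ ω, W 0 ω = (i : ℤ)) (hi : i ≤ N) {ω : Ω}

include hWrec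

lemma W_absorb : ∀ n m, n ≤ m → (W n ω = 0 ∨ W n ω = (N : ℤ)) → W m ω = W n ω := by
  intro n m hnm habs
  have key : ∀ d, W (n + d) ω = W n ω := by
    intro d
    induction d with
    | zero => rfl
    | succ d ih => rw [show n + (d+1) = (n+d)+1 by ring, hWrec (n+d) ω, ih, if_pos habs]
  obtain ⟨d, rfl⟩ := Nat.exists_eq_add_of_le hnm
  exact key d

include hW0' hi in
lemma W_mem_range (hG : ∀ k, X k ω = 1 ∨ X k ω = -1 ∨ X k ω = 0) :
    ∀ n, 0 ≤ W n ω ∧ W n ω ≤ (N : ℤ) := by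
  intro n
  induction n with
  | zero => rw [hW0' ω]; constructor <;> [positivity; exact_mod_cast hi]
  | succ n ih =>
      rw [hWrec n ω]
      by_cases habs : W n ω = 0 ∨ W n ω = (N : ℤ)
      · simp only [habs, if_true]; exact ih
      · simp only [habs, if_false]
        push_neg at habs
        rcases hG n with h | h | h <;> rw [h] <;> omega

include hW0' hi in
lemma W_block_absorb (hG : ∀ k, X k ω = 1 ∨ X k ω = -1 ∨ X k ω = 0)
    (n : ℕ) (hblock : ∀ k ∈ Finset.Ico n (n + N), X k ω = 1) :
    W (n + N) ω = 0 ∨ W (n + N) ω = (N : ℤ) := by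
  by_cases h0 : W n ω = 0 ∨ W n ω = (N : ℤ)
  · rw [W_absorb hWrec n (n + N) (Nat.le_add_right _ _) h0]; exact h0
  have key : ∀ t, t ≤ N → (W (n + t) ω = 0 ∨ W (n + t) ω = (N : ℤ)) ∨
      W (n + t) ω = W n ω + t := by
    intro t
    induction t with
    | zero => intro _; right; simp
    | succ t ih =>
        intro ht
        rcases ih (Nat.le_of_succ_le ht) with habs | heq
        · left
          rw [show n + (t+1) = (n + t) + 1 by ring, W_absorb hWrec (n+t) (n+t+1) (by omega) habs]
          exact habs
        · by_cases habs : W (n+t) ω = 0 ∨ W (n+t) ω = (N : ℤ)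
          · left
            rw [show n + (t+1) = (n + t) + 1 by ring,
              W_absorb hWrec (n+t) (n+t+1) (by omega) habs]
            exact habs
          · right
            rw [show n + (t+1) = (n + t) + 1 by ring, hWrec (n+t) ω, if_neg habs, heq,
              hblock (n+t) (by simp [Finset.mem_Ico]; omega)]
            push_cast; ring
  rcases key N le_rfl with habs | heq
  · exact habs
  · exfalso
    have h1 : 0 ≤ W n ω ∧ W n ω ≤ (N : ℤ) := W_mem_range hWrec hW0' hi hG n
    have h2 : W (n + N) ω ≤ (N : ℤ) := (W_mem_range hWrec hW0' hi hG (n + N)).2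
    push_neg at h0
    omega


end Det

lemma X_other_null (hXm : ∀ n, Measurable (X n))
    (hp : 0 ≤ p) (hq : 0 ≤ q) (hpq : p + q ≤ 1)
    (hX1 : ∀ n, μ {ω | X n ω = 1} = ENNReal.ofReal p)
    (hX2 : ∀ n, μ {ω | X n ω = -1} = ENNReal.ofReal q)
    (hX3 : ∀ n, μ {ω | X n ω = 0} = ENNReal.ofReal (1 - p - q))
    (n : ℕ) {c : ℤ} (hc1 : c ≠ 1) (hc2 : c ≠ -1) (hc3 : c ≠ 0) :
    μ {ω | X n ω = c} = 0 := by
  have hsub : {ω | X n ω = c} ⊆ {ω | ¬∀ k, (X k ω = 1 ∨ X k ω = -1 ∨ X k ω = 0)} := by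
    intro ω hω hall
    rcases hall n with h | h | h <;> rw [Set.mem_setOf_eq] at hω <;> rw [hω] at h <;> tauto
  exact measure_mono_null hsub (G_null hXm hp hq hpq hX1 hX2 hX3)

lemma step_eq (hXm : ∀ n, Measurable (X n))
    (hindep : iIndepFun X μ)
    (hq : 0 < q) (hqp : q < p) (hpq : p + q ≤ 1) (hN : 1 ≤ N) (hi : i ≤ N)
    (hX1 : ∀ n, μ {ω | X n ω = 1} = ENNReal.ofReal p)
    (hX2 : ∀ n, μ {ω | X n ω = -1} = ENNReal.ofReal q)
    (hX3 : ∀ n, μ {ω | X n ω = 0} = ENNReal.ofReal (1 - p - q))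
    (hW0' : ∀ ω, W 0 ω = (i : ℤ))
    (hWrec : ∀ n ω, W (n + 1) ω =
      if W n ω = 0 ∨ W n ω = (N : ℤ) then W n ω else W n ω + X n ω)
    (n : ℕ) :
    ∑ k ∈ Finset.range (N+1), phi p q N k * (μ {ω | W (n+1) ω = (k:ℤ)}).toReal
      = ∑ j ∈ Finset.range (N+1), phi p q N j * (μ {ω | W n ω = (j:ℤ)}).toReal := by
  have hp : 0 < p := hq.trans hqp
  have hWm : ∀ m, Measurable (W m) := W_measurable hXm hW0' hWrec
  have hWms : ∀ m (c : ℤ), MeasurableSet {ω | W m ω = c} := fun m c =>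
    (hWm m) (MeasurableSet.of_discrete (s := {c}))
  have hGnull : μ {ω | ¬∀ k, (X k ω = 1 ∨ X k ω = -1 ∨ X k ω = 0)} = 0 :=
    G_null hXm hp.le hq.le hpq hX1 hX2 hX3
  -- decomposition of the time-(n+1) distribution over the time-n value
  have hdecomp : ∀ k : ℕ, μ {ω | W (n+1) ω = (k:ℤ)}
      = ∑ j ∈ Finset.range (N+1),
          μ ({ω | W n ω = (j:ℤ)} ∩ {ω | W (n+1) ω = (k:ℤ)}) := by
    intro k
    set S := {ω | W (n+1) ω = (k:ℤ)} with hS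
    set U := ⋃ j ∈ Finset.range (N+1), ({ω | W n ω = (j:ℤ)} ∩ S) with hU
    have hUm : MeasurableSet U :=
      Finset.measurableSet_biUnion _ fun j _ => (hWms n j).inter (hWms (n+1) k)
    have hdiff : S \ U ⊆ {ω | ¬∀ k, (X k ω = 1 ∨ X k ω = -1 ∨ X k ω = 0)} := by
      intro ω hω
      simp only [Set.mem_setOf_eq]
      intro hG
      have hrange := W_mem_range hWrec hW0' hi hG n
      apply hω.2
      rw [hU]
      simp only [Set.mem_iUnion, Finset.mem_range]
      refine ⟨(W n ω).toNat, by omega, ?_, hω.1⟩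
      simp only [Set.mem_setOf_eq]
      omega
    have hUS : U ⊆ S := by
      rw [hU]
      intro ω hω
      simp only [Set.mem_iUnion, Set.mem_inter_iff, exists_prop] at hω
      obtain ⟨j, _, _, h2⟩ := hω
      exact h2
    have hSU : μ S = μ U := by
      refine le_antisymm ?_ (measure_mono hUS)
      calc μ S = μ (S ∩ U) + μ (S \ U) := (measure_inter_add_diff S hUm).symm
        _ ≤ μ U + 0 := add_le_add (measure_mono Set.inter_subset_right)
              (le_of_eq (measure_mono_null hdiff hGnull))
        _ = μ U := add_zero _
    have hpd : (↑(Finset.range (N+1)) : Set ℕ).PairwiseDisjoint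
        (fun j : ℕ => {ω | W n ω = (j:ℤ)} ∩ S) := by
      intro a _ b _ hab
      apply Set.disjoint_left.mpr
      rintro ω ⟨hω1, _⟩ ⟨hω2, _⟩
      exact hab (by exact_mod_cast (hω1 : W n ω = (a:ℤ)).symm.trans hω2)
    rw [hSU, hU, measure_biUnion_finset hpd (fun j _ => (hWms n j).inter (hWms (n+1) k))]
  -- rewrite LHS as a double sum and swap
  have hfin : ∀ (s : Set Ω), μ s ≠ ⊤ := fun s => (measure_lt_top μ s).ne
  calc ∑ k ∈ Finset.range (N+1), phi p q N k * (μ {ω | W (n+1) ω = (k:ℤ)}).toReal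
      = ∑ k ∈ Finset.range (N+1), ∑ j ∈ Finset.range (N+1),
          phi p q N k * (μ ({ω | W n ω = (j:ℤ)} ∩ {ω | W (n+1) ω = (k:ℤ)})).toReal := by
        refine Finset.sum_congr rfl fun k _ => ?_
        rw [hdecomp k, ENNReal.toReal_sum (fun j _ => hfin _), Finset.mul_sum]
    _ = ∑ j ∈ Finset.range (N+1), ∑ k ∈ Finset.range (N+1),
          phi p q N k * (μ ({ω | W n ω = (j:ℤ)} ∩ {ω | W (n+1) ω = (k:ℤ)})).toReal :=
        Finset.sum_comm
    _ = ∑ j ∈ Finset.range (N+1), phi p q N j * (μ {ω | W n ω = (j:ℤ)}).toReal := by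
        refine Finset.sum_congr rfl fun j hj => ?_
        rw [Finset.mem_range] at hj
        by_cases hjb : j = 0 ∨ j = N
        · -- boundary case
          have habs : ∀ ω, W n ω = (j:ℤ) → W (n+1) ω = (j:ℤ) := by
            intro ω hω
            rw [hWrec n ω, hω, if_pos]
            rcases hjb with h | h <;> subst h <;> simp
          refine (Finset.sum_eq_single j (fun k _ hkj => ?_)
            (fun h => absurd (Finset.mem_range.mpr hj) h)).trans ?_
          · have : {ω | W n ω = (j:ℤ)} ∩ {ω | W (n+1) ω = (k:ℤ)} = ∅ := by
              ext ω
              simp only [Set.mem_inter_iff, Set.mem_setOf_eq, Set.mem_empty_iff_false,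
                iff_false, not_and]
              intro h1 h2
              exact hkj (by exact_mod_cast ((habs ω h1).symm.trans h2).symm)
            rw [this]; simp
          · have hAB : {ω | W n ω = (j:ℤ)} ∩ {ω | W (n+1) ω = (j:ℤ)}
                = {ω | W n ω = (j:ℤ)} := by
              ext ω
              simp only [Set.mem_inter_iff, Set.mem_setOf_eq, and_iff_left_iff_imp]
              exact habs ω
            rw [hAB]
        · -- interior case
          push_neg at hjb
          obtain ⟨j', rfl⟩ : ∃ j', j = j' + 1 := ⟨j - 1, by omega⟩
          have hj2 : j' + 2 ≤ N := by omega
          have hjz : ((j' + 1 : ℕ) : ℤ) ≠ 0 := by exact_mod_cast hjb.1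
          have hjN : ((j' + 1 : ℕ) : ℤ) ≠ (N : ℤ) := by exact_mod_cast hjb.2
          have hset : ∀ k : ℕ, {ω | W n ω = ((j'+1:ℕ):ℤ)} ∩ {ω | W (n+1) ω = (k:ℤ)}
              = {ω | W n ω = ((j'+1:ℕ):ℤ)} ∩ {ω | X n ω = (k:ℤ) - ((j'+1:ℕ):ℤ)} := by
            intro k
            ext ω
            simp only [Set.mem_inter_iff, Set.mem_setOf_eq, and_congr_right_iff]
            intro h1
            rw [hWrec n ω, h1, if_neg (by push_neg; exact ⟨hjz, hjN⟩)]
            omega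
          have hterm : ∀ k : ℕ,
              (μ ({ω | W n ω = ((j'+1:ℕ):ℤ)} ∩ {ω | W (n+1) ω = (k:ℤ)})).toReal
              = (μ {ω | W n ω = ((j'+1:ℕ):ℤ)}).toReal
                * (μ {ω | X n ω = (k:ℤ) - ((j'+1:ℕ):ℤ)}).toReal := by
            intro k
            rw [hset k, indep_W_X hXm hindep hW0' hWrec n _ _, ENNReal.toReal_mul]
          simp only [hterm]
          rw [show ∑ k ∈ Finset.range (N+1), phi p q N k *
              ((μ {ω | W n ω = ((j'+1:ℕ):ℤ)}).toReal
                * (μ {ω | X n ω = (k:ℤ) - ((j'+1:ℕ):ℤ)}).toReal)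
              = (μ {ω | W n ω = ((j'+1:ℕ):ℤ)}).toReal * ∑ k ∈ Finset.range (N+1),
                  phi p q N k * (μ {ω | X n ω = (k:ℤ) - ((j'+1:ℕ):ℤ)}).toReal by
            rw [Finset.mul_sum]; exact Finset.sum_congr rfl fun k _ => by ring]
          rw [mul_comm (phi p q N (j'+1))]
          congr 1
          -- the key local sum
          have hTsub : ({j', j'+1, j'+2} : Finset ℕ) ⊆ Finset.range (N+1) := by
            intro x hx
            simp only [Finset.mem_insert, Finset.mem_singleton] at hx
            rw [Finset.mem_range]
            omega
          rw [← Finset.sum_subset hTsub ?vanish]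
          · have h1 : (j' : ℤ) - ((j'+1:ℕ):ℤ) = -1 := by push_cast; ring
            have h2 : ((j'+1:ℕ) : ℤ) - ((j'+1:ℕ):ℤ) = 0 := by ring
            have h3 : ((j'+2:ℕ) : ℤ) - ((j'+1:ℕ):ℤ) = 1 := by push_cast; ring
            rw [Finset.sum_insert (by simp), Finset.sum_insert (by simp),
              Finset.sum_singleton]
            rw [h1, h2, h3, hX1 n, hX2 n, hX3 n,
              ENNReal.toReal_ofReal hq.le, ENNReal.toReal_ofReal (by linarith),
              ENNReal.toReal_ofReal hp.le]
            have := phi_harmonic hq hqp hN j'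
            linarith
          case vanish =>
            intro k hk hkT
            simp only [Finset.mem_insert, Finset.mem_singleton] at hkT
            push_neg at hkT
            have : μ {ω | X n ω = (k:ℤ) - ((j'+1:ℕ):ℤ)} = 0 := by
              refine X_other_null hXm hp.le hq.le hpq hX1 hX2 hX3 n ?_ ?_ ?_ <;>
                [skip; skip; skip] <;> push_cast <;> omega
            rw [this]; simp

lemma a_zero (hW0' : ∀ ω, W 0 ω = (i : ℤ)) (hiN : i ≤ N) :
    ∑ j ∈ Finset.range (N+1), phi p q N j * (μ {ω | W 0 ω = (j:ℤ)}).toReal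
      = EpiAux.phi p q N i := by
  rw [Finset.sum_eq_single i]
  · have : {ω | W 0 ω = (i:ℤ)} = Set.univ := by
      ext ω; simp [hW0' ω]
    rw [this, measure_univ, ENNReal.toReal_one, mul_one]
  · intro j _ hji
    have : {ω | W 0 ω = (j:ℤ)} = ∅ := by
      ext ω
      simp only [Set.mem_setOf_eq, hW0' ω, Set.mem_empty_iff_false, iff_false]
      exact fun h => hji (by exact_mod_cast h.symm)
    rw [this]; simp
  · intro h; exact absurd (Finset.mem_range.mpr (by omega)) h

lemma a_le (hq : 0 < q) (hqp : q < p) (hN : 1 ≤ N)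
    (hWms : ∀ m (c : ℤ), MeasurableSet {ω | W m ω = c}) (n : ℕ) :
    ∑ j ∈ Finset.range (N+1), phi p q N j * (μ {ω | W n ω = (j:ℤ)}).toReal
      ≤ (μ {ω | W n ω = (N:ℤ)}).toReal
        + (μ {ω | W n ω ≠ 0 ∧ W n ω ≠ (N:ℤ)}).toReal := by
  rw [Finset.sum_range_succ, phi_N hq hqp hN, one_mul, add_comm]
  gcongr
  have h0 : (0:ℕ) ∈ Finset.range N := Finset.mem_range.mpr (by omega)
  rw [← Finset.sum_erase_add _ _ h0, phi_zero, zero_mul, add_zero]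
  have hIco : (Finset.range N).erase 0 = Finset.Ico 1 N := by
    ext x; simp [Finset.mem_erase, Finset.mem_Ico, Finset.mem_range]; omega
  rw [hIco]
  calc ∑ j ∈ Finset.Ico 1 N, phi p q N j * (μ {ω | W n ω = (j:ℤ)}).toReal
      ≤ ∑ j ∈ Finset.Ico 1 N, (μ {ω | W n ω = (j:ℤ)}).toReal := by
        refine Finset.sum_le_sum fun j hj => ?_
        rw [Finset.mem_Ico] at hj
        exact mul_le_of_le_one_left ENNReal.toReal_nonneg
          (phi_le_one hq hqp hN (by omega))
    _ = (μ (⋃ j ∈ Finset.Ico 1 N, {ω | W n ω = (j:ℤ)})).toReal := by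
        have hpd : (↑(Finset.Ico 1 N) : Set ℕ).PairwiseDisjoint
            (fun j : ℕ => {ω | W n ω = (j:ℤ)}) := by
          intro a _ b _ hab
          apply Set.disjoint_left.mpr
          intro ω hω1 hω2
          exact hab (by exact_mod_cast (hω1 : W n ω = (a:ℤ)).symm.trans hω2)
        have hb := measure_biUnion_finset (μ := μ) hpd
          (fun j (_ : j ∈ Finset.Ico 1 N) => hWms n (j:ℤ))
        rw [hb, ENNReal.toReal_sum fun j _ => (measure_lt_top μ _).ne]
    _ ≤ (μ {ω | W n ω ≠ 0 ∧ W n ω ≠ (N:ℤ)}).toReal := by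
        refine ENNReal.toReal_mono (measure_lt_top μ _).ne (measure_mono ?_)
        intro ω hω
        simp only [Set.mem_iUnion, exists_prop] at hω
        obtain ⟨j, hj, hωj⟩ := hω
        rw [Finset.mem_Ico] at hj
        have : W n ω = (j:ℤ) := hωj
        constructor <;> rw [this] <;> [exact_mod_cast (by omega : (j:ℤ) ≠ 0);
          exact fun h => (by omega : j ≠ N) (by exact_mod_cast h)]

lemma interior_decay (hXm : ∀ n, Measurable (X n))
    (hindep : iIndepFun X μ)
    (hq : 0 < q) (hqp : q < p) (hpq : p + q ≤ 1) (hN : 1 ≤ N) (hi : i ≤ N)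
    (hX1 : ∀ n, μ {ω | X n ω = 1} = ENNReal.ofReal p)
    (hX2 : ∀ n, μ {ω | X n ω = -1} = ENNReal.ofReal q)
    (hX3 : ∀ n, μ {ω | X n ω = 0} = ENNReal.ofReal (1 - p - q))
    (hW0' : ∀ ω, W 0 ω = (i : ℤ))
    (hWrec : ∀ n ω, W (n + 1) ω =
      if W n ω = 0 ∨ W n ω = (N : ℤ) then W n ω else W n ω + X n ω)
    (m : ℕ) :
    μ {ω | W (m * N) ω ≠ 0 ∧ W (m * N) ω ≠ (N:ℤ)} ≤ ENNReal.ofReal ((1 - p ^ N) ^ m) := by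
  have hp : 0 < p := hq.trans hqp
  have hp1 : p ≤ 1 := by linarith
  have hpN0 : 0 ≤ 1 - p ^ N := by
    have := pow_le_one₀ hp.le hp1 (n := N); linarith
  induction m with
  | zero => simpa using prob_le_one
  | succ m ih =>
      have hGnull : μ {ω | ¬∀ k, (X k ω = 1 ∨ X k ω = -1 ∨ X k ω = 0)} = 0 :=
        G_null hXm hp.le hq.le hpq hX1 hX2 hX3
      set G : Set Ω := {ω | ∀ k, (X k ω = 1 ∨ X k ω = -1 ∨ X k ω = 0)} with hGdef
      have hGc : μ Gᶜ = 0 := by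
        have : Gᶜ = {ω | ¬∀ k, (X k ω = 1 ∨ X k ω = -1 ∨ X k ω = 0)} := by
          ext ω; simp [hGdef]
        rw [this]; exact hGnull
      have hJG : {ω | W ((m+1) * N) ω ≠ 0 ∧ W ((m+1) * N) ω ≠ (N:ℤ)} ∩ G
          ⊆ {ω | W (m * N) ω ≠ 0 ∧ W (m * N) ω ≠ (N:ℤ)}
            ∩ {ω | ∃ k ∈ Finset.Ico (m * N) (m * N + N), X k ω ≠ 1} := by
        rintro ω ⟨hJ, hG⟩
        have hmm : (m+1) * N = m * N + N := by ring
        constructor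
        · by_contra habs
          simp only [Set.mem_setOf_eq, not_and_or, not_not] at habs
          have h2 : W (m * N) ω = 0 ∨ W (m * N) ω = (N:ℤ) := by tauto
          have heq := W_absorb hWrec (m * N) ((m+1) * N) (by omega) h2
          obtain ⟨hJ1, hJ2⟩ := hJ
          rcases h2 with h | h
          · exact hJ1 (heq.trans h)
          · exact hJ2 (heq.trans h)
        · by_contra hall
          simp only [Set.mem_setOf_eq, not_exists, not_and, not_not] at hall
          have hblock : ∀ k ∈ Finset.Ico (m * N) (m * N + N), X k ω = 1 :=
            fun k hk => hall k hk
          have := W_block_absorb hWrec hW0' hi hG (m * N) hblock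
          rw [← hmm] at this
          rcases this with h | h
          · exact hJ.1 h
          · exact hJ.2 h
      calc μ {ω | W ((m+1) * N) ω ≠ 0 ∧ W ((m+1) * N) ω ≠ (N:ℤ)}
          = μ ({ω | W ((m+1) * N) ω ≠ 0 ∧ W ((m+1) * N) ω ≠ (N:ℤ)} ∩ G) :=
            (measure_inter_conull hGc).symm
        _ ≤ μ ({ω | W (m * N) ω ≠ 0 ∧ W (m * N) ω ≠ (N:ℤ)}
            ∩ {ω | ∃ k ∈ Finset.Ico (m * N) (m * N + N), X k ω ≠ 1}) := measure_mono hJG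
        _ = μ {ω | W (m * N) ω ≠ 0 ∧ W (m * N) ω ≠ (N:ℤ)}
            * μ {ω | ∃ k ∈ Finset.Ico (m * N) (m * N + N), X k ω ≠ 1} :=
            indep_interior_block hXm hindep hW0' hWrec (m * N) (m * N + N)
        _ ≤ ENNReal.ofReal ((1 - p ^ N) ^ m) * ENNReal.ofReal (1 - p ^ N) := by
            rw [block_prob hXm hindep hp.le hp1 hX1 (m * N) (m * N + N)]
            have : m * N + N - m * N = N := by omega
            rw [this]
            exact mul_le_mul' ih le_rfl
        _ = ENNReal.ofReal ((1 - p ^ N) ^ (m+1)) := by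
            rw [← ENNReal.ofReal_mul (by positivity), ← pow_succ]

lemma main_bound (hXm : ∀ n, Measurable (X n))
    (hindep : iIndepFun X μ)
    (hq : 0 < q) (hqp : q < p) (hpq : p + q ≤ 1) (hN : 1 ≤ N) (hi : i ≤ N)
    (hX1 : ∀ n, μ {ω | X n ω = 1} = ENNReal.ofReal p)
    (hX2 : ∀ n, μ {ω | X n ω = -1} = ENNReal.ofReal q)
    (hX3 : ∀ n, μ {ω | X n ω = 0} = ENNReal.ofReal (1 - p - q))
    (hW0' : ∀ ω, W 0 ω = (i : ℤ))
    (hWrec : ∀ n ω, W (n + 1) ω =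
      if W n ω = 0 ∨ W n ω = (N : ℤ) then W n ω else W n ω + X n ω) :
    EpiAux.phi p q N i ≤ (μ {ω | ∃ n, W n ω = (N : ℤ)}).toReal := by
  have hp : 0 < p := hq.trans hqp
  have hp1 : p < 1 := by linarith
  have hWms : ∀ m (c : ℤ), MeasurableSet {ω | W m ω = c} := fun m c =>
    (W_measurable hXm hW0' hWrec m) (MeasurableSet.of_discrete (s := {c}))
  have hconst : ∀ n, ∑ j ∈ Finset.range (N+1),
      phi p q N j * (μ {ω | W n ω = (j:ℤ)}).toReal = EpiAux.phi p q N i := by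
    intro n
    induction n with
    | zero => exact a_zero hW0' hi
    | succ n ih =>
        rw [step_eq hXm hindep hq hqp hpq hN hi hX1 hX2 hX3 hW0' hWrec n]; exact ih
  have hpN0 : 0 ≤ 1 - p ^ N := by
    have := pow_le_one₀ hp.le hp1.le (n := N); linarith
  have hpN1 : 1 - p ^ N < 1 := by
    have : 0 < p ^ N := by positivity
    linarith
  have key : ∀ m : ℕ, EpiAux.phi p q N i
      ≤ (μ {ω | ∃ n, W n ω = (N : ℤ)}).toReal + (1 - p ^ N) ^ m := by
    intro m
    calc EpiAux.phi p q N i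
        = ∑ j ∈ Finset.range (N+1),
            phi p q N j * (μ {ω | W (m * N) ω = (j:ℤ)}).toReal := (hconst (m * N)).symm
      _ ≤ (μ {ω | W (m * N) ω = (N:ℤ)}).toReal
            + (μ {ω | W (m * N) ω ≠ 0 ∧ W (m * N) ω ≠ (N:ℤ)}).toReal :=
          a_le hq hqp hN hWms (m * N)
      _ ≤ (μ {ω | ∃ n, W n ω = (N : ℤ)}).toReal + (1 - p ^ N) ^ m := by
          refine add_le_add ?_ ?_
          · exact ENNReal.toReal_mono (measure_ne_top μ _)
              (measure_mono fun ω hω => ⟨m * N, hω⟩)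
          · exact ENNReal.toReal_le_of_le_ofReal (by positivity)
              (interior_decay hXm hindep hq hqp hpq hN hi hX1 hX2 hX3 hW0' hWrec m)
  have htend : Filter.Tendsto
      (fun m : ℕ => (μ {ω | ∃ n, W n ω = (N : ℤ)}).toReal + (1 - p ^ N) ^ m)
      Filter.atTop (nhds ((μ {ω | ∃ n, W n ω = (N : ℤ)}).toReal + 0)) :=
    Filter.Tendsto.add tendsto_const_nhds
      (tendsto_pow_atTop_nhds_zero_of_lt_one hpN0 hpN1)
  have := ge_of_tendsto' htend key
  linarith

end Walk
end EpiAux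

/-- If the walk starts with at least `2μ₀` ones (where `μ₀ = W₀·N/(W₀+W₁)` and
`2μ₀ ≤ N`), then the probability that the consensus value is `1` is at least
`(1-(W₀/W₁)^(4μ₀))/(1-(W₀/W₁)^(2N))`, which is at least `1-(W₀/W₁)^(4μ₀)`. -/

theorem epigenetic_majority_conditional
    {Ω : Type*} [MeasurableSpace Ω] (μ : Measure Ω) [IsProbabilityMeasure μ]
    (W0 W1 : ℝ) (hW0 : 0 < W0) (hW01 : W0 < W1)
    (N i : ℕ) (hi : i ≤ N)
    (hstart : 2 * (W0 * N / (W0 + W1)) ≤ (i : ℝ))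
    (hμN : 2 * (W0 * N / (W0 + W1)) ≤ (N : ℝ))
    (X : ℕ → Ω → ℤ) (hXm : ∀ n, Measurable (X n))
    (hindep : iIndepFun X μ)
    (hX1 : ∀ n, μ {ω | X n ω = 1} = ENNReal.ofReal ((W1 / (W0 + W1)) ^ 2))
    (hX2 : ∀ n, μ {ω | X n ω = -1} = ENNReal.ofReal ((W0 / (W0 + W1)) ^ 2))
    (hX3 : ∀ n, μ {ω | X n ω = 0} =
      ENNReal.ofReal (1 - (W1 / (W0 + W1)) ^ 2 - (W0 / (W0 + W1)) ^ 2))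
    (W : ℕ → Ω → ℤ) (hW0' : ∀ ω, W 0 ω = (i : ℤ))
    (hWrec : ∀ n ω, W (n + 1) ω =
      if W n ω = 0 ∨ W n ω = (N : ℤ) then W n ω else W n ω + X n ω) :
    (μ {ω | ∃ n, W n ω = (N : ℤ)}).toReal ≥
        (1 - (W0 / W1) ^ (4 * (W0 * N / (W0 + W1)))) /
          (1 - (W0 / W1) ^ (2 * (N : ℝ))) ∧
      (1 - (W0 / W1) ^ (4 * (W0 * N / (W0 + W1)))) /
          (1 - (W0 / W1) ^ (2 * (N : ℝ))) ≥
        1 - (W0 / W1) ^ (4 * (W0 * N / (W0 + W1))) := by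
  rcases Nat.eq_zero_or_pos N with hN0 | hNpos
  · subst hN0
    simp only [Nat.cast_zero, mul_zero, zero_div, Real.rpow_zero, sub_self, div_zero]
    exact ⟨ENNReal.toReal_nonneg, le_refl 0⟩
  · have hs : 0 < W0 + W1 := by linarith
    have hW1 : 0 < W1 := lt_trans hW0 hW01
    set p : ℝ := (W1 / (W0 + W1)) ^ 2 with hpdef
    set q : ℝ := (W0 / (W0 + W1)) ^ 2 with hqdef
    have hq : 0 < q := by positivity
    have hqp : q < p :=
      pow_lt_pow_left₀ ((div_lt_div_iff_of_pos_right hs).mpr hW01) (by positivity) two_ne_zero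
    have hpq : p + q ≤ 1 := by
      rw [hpdef, hqdef, div_pow, div_pow, ← add_div, div_le_one (by positivity)]
      nlinarith
    have hr0 : 0 < W0 / W1 := by positivity
    have hr1 : W0 / W1 < 1 := (div_lt_one hW1).mpr hW01
    have hrho : q / p = (W0 / W1) ^ 2 := by
      have h1 : W0 + W1 ≠ 0 := ne_of_gt hs
      have h2 : W1 ≠ 0 := ne_of_gt hW1
      rw [hpdef, hqdef]
      field_simp
    have hμ0 : 0 ≤ W0 * N / (W0 + W1) := by positivity
    -- denominator identity
    have hden : (W0 / W1) ^ (2 * (N : ℝ)) = (q / p) ^ N := by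
      have h1 : (2 : ℝ) * (N : ℝ) = ((2 * N : ℕ) : ℝ) := by push_cast; ring
      rw [h1, Real.rpow_natCast, hrho, pow_mul]
    -- numerator comparison
    have hnum : (W0 / W1) ^ ((2 * i : ℕ) : ℝ) ≤ (W0 / W1) ^ (4 * (W0 * N / (W0 + W1))) := by
      apply Real.rpow_le_rpow_of_exponent_ge hr0 hr1.le
      push_cast
      linarith
    have hqpN : (q / p) ^ N < 1 :=
      pow_lt_one₀ (by positivity) ((div_lt_one (hq.trans hqp)).mpr hqp) (by omega)
    have hdpos : 0 < 1 - (W0 / W1) ^ (2 * (N : ℝ)) := by rw [hden]; linarith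
    have hd1 : 1 - (W0 / W1) ^ (2 * (N : ℝ)) ≤ 1 := by
      have : 0 ≤ (W0 / W1) ^ (2 * (N : ℝ)) := Real.rpow_nonneg hr0.le _
      linarith
    have hA0 : 0 ≤ 1 - (W0 / W1) ^ (4 * (W0 * N / (W0 + W1))) := by
      have : (W0 / W1) ^ (4 * (W0 * N / (W0 + W1))) ≤ 1 :=
        Real.rpow_le_one hr0.le hr1.le (by positivity)
      linarith
    have hmain := EpiAux.main_bound hXm hindep hq hqp hpq hNpos hi hX1 hX2 hX3 hW0' hWrec
    have hchain : (1 - (W0 / W1) ^ (4 * (W0 * N / (W0 + W1)))) /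
        (1 - (W0 / W1) ^ (2 * (N : ℝ))) ≤ EpiAux.phi p q N i := by
      rw [EpiAux.phi, hden]
      have hdpos' : (0:ℝ) < 1 - (q / p) ^ N := by linarith
      apply (div_le_div_iff_of_pos_right hdpos').mpr
      have hqpi : (q / p) ^ i = (W0 / W1) ^ ((2 * i : ℕ) : ℝ) := by
        rw [hrho, Real.rpow_natCast, pow_mul]
      rw [hqpi]
      linarith
    constructor
    · exact le_trans hchain hmain
    · rw [ge_iff_le, le_div_iff₀ hdpos]
      exact mul_le_of_le_one_right hA0 hd1
end

section
/- Let P = (W_1/(W_0+W_1))² and Q = (W_0/(W_0+W_1))² with W_1 > W_0 > 0. Then for 0 ≤ i ≤ N, ((N/(P-Q))·(1-(Q/P)^i)/(1-(Q/P)^N) - i/(P-Q))·(1/(P+Q)) ≤ (N-i)/(P²-Q²). -/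
lemma aux_bound (P Q : ℝ) (hQ : 0 < Q) (hQP : Q < P) (N i : ℕ) (hi : i ≤ N) :
    ((N : ℝ) / (P - Q) * ((1 - (Q / P) ^ i) / (1 - (Q / P) ^ N)) -
      (i : ℝ) / (P - Q)) * (1 / (P + Q)) ≤ ((N : ℝ) - i) / (P ^ 2 - Q ^ 2) := by
  have hP : 0 < P := hQ.trans hQP
  have hPQ : 0 < P - Q := by linarith
  have hPQ' : 0 < P + Q := by linarith
  have hr0 : 0 < Q / P := div_pos hQ hP
  have hr1 : Q / P < 1 := (div_lt_one hP).2 hQP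
  have hdenom : P ^ 2 - Q ^ 2 = (P - Q) * (P + Q) := by ring
  rcases Nat.eq_zero_or_pos N with hN | hN
  · subst hN
    interval_cases i
    simp
  · have hN' : 0 < 1 - (Q / P) ^ N := by
      have := pow_lt_one₀ hr0.le hr1 hN.ne'
      linarith
    have hratio : (1 - (Q / P) ^ i) / (1 - (Q / P) ^ N) ≤ 1 := by
      rw [div_le_one hN']
      have := pow_le_pow_of_le_one hr0.le hr1.le hi
      linarith
    have h1 : (N : ℝ) / (P - Q) * ((1 - (Q / P) ^ i) / (1 - (Q / P) ^ N)) ≤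
        (N : ℝ) / (P - Q) := by
      have hNpos : (0:ℝ) ≤ (N : ℝ) / (P - Q) := by positivity
      calc (N : ℝ) / (P - Q) * ((1 - (Q / P) ^ i) / (1 - (Q / P) ^ N)) ≤
          (N : ℝ) / (P - Q) * 1 := by
            exact mul_le_mul_of_nonneg_left hratio hNpos
        _ = (N : ℝ) / (P - Q) := by ring
    have h2 : ((N : ℝ) / (P - Q) * ((1 - (Q / P) ^ i) / (1 - (Q / P) ^ N)) -
        (i : ℝ) / (P - Q)) * (1 / (P + Q)) ≤
        ((N : ℝ) / (P - Q) - (i : ℝ) / (P - Q)) * (1 / (P + Q)) := by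
      apply mul_le_mul_of_nonneg_right _ (by positivity)
      linarith
    refine h2.trans (le_of_eq ?_)
    rw [hdenom]
    field_simp

/-- Bound on the expected number of update-steps: with `P = (W₁/(W₀+W₁))²` and
`Q = (W₀/(W₀+W₁))²`, `W₁ > W₀ > 0`, the gambler's-ruin expected-time formula is
bounded by `(N-i)/(P²-Q²)`. -/
theorem expected_update_steps_bound
    (W0 W1 : ℝ) (hW0 : 0 < W0) (hW01 : W0 < W1)
    (N i : ℕ) (hi : i ≤ N) :
    (((N : ℝ) / ((W1 / (W0 + W1)) ^ 2 - (W0 / (W0 + W1)) ^ 2)) *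
        ((1 - ((W0 / (W0 + W1)) ^ 2 / (W1 / (W0 + W1)) ^ 2) ^ i) /
          (1 - ((W0 / (W0 + W1)) ^ 2 / (W1 / (W0 + W1)) ^ 2) ^ N)) -
        (i : ℝ) / ((W1 / (W0 + W1)) ^ 2 - (W0 / (W0 + W1)) ^ 2)) *
      (1 / ((W1 / (W0 + W1)) ^ 2 + (W0 / (W0 + W1)) ^ 2)) ≤
    ((N : ℝ) - i) /
      (((W1 / (W0 + W1)) ^ 2) ^ 2 - ((W0 / (W0 + W1)) ^ 2) ^ 2) := by
  have hsum : 0 < W0 + W1 := by linarith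
  apply aux_bound
  · positivity
  · have h : W0 / (W0 + W1) < W1 / (W0 + W1) := by
      gcongr
    exact pow_lt_pow_left₀ h (by positivity) (by norm_num)
  · exact hi
end
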